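/- arXiv:1506.07124 — 2 statements merged into one kernel-verified Lean document; each statement's English description precedes it below -/
import Mathlib

section
/- Let ω be an n-dimensional probability vector, Q an n×m joint probability matrix, and α ∈ [0,1]. Let W_ω = {w : q^{|w} ≺ ω}. If Σ_{w ∈ W_ω} q_w ≥ 1 − α, then Ω ≻_c Q, where Ω is the n... by 2 joint probability matrix whose first column is (α, 0, ..., 0)ᵀ and second column is (1−α)·ω. -/
open Matrix Finset

/-- Row-stochastic matrix: nonnegative entries, each row sums to 1. -/
def RowStoch {ℓ m : ℕ} (T : Matrix (Fin ℓ) (Fin m) ℝ) : Prop :=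
  (∀ y w, 0 ≤ T y w) ∧ ∀ y, ∑ w, T y w = 1

/-- Doubly stochastic matrix. -/
def DStoch {n : ℕ} (D : Matrix (Fin n) (Fin n) ℝ) : Prop :=
  (∀ i j, 0 ≤ D i j) ∧ (∀ i, ∑ j, D i j = 1) ∧ (∀ j, ∑ i, D i j = 1)

/-- Conditional majorization `P ≻_c Q` via classical-conditioned random relabelings:
`Q = ∑ j, D j * P * R j` with each `D j` doubly stochastic, each `R j` entrywise
nonnegative, and `∑ j, R j` row-stochastic. -/
def CondMaj {n ℓ m : ℕ} (P : Matrix (Fin n) (Fin ℓ) ℝ)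
    (Q : Matrix (Fin n) (Fin m) ℝ) : Prop :=
  ∃ (J : ℕ) (D : Fin J → Matrix (Fin n) (Fin n) ℝ)
    (R : Fin J → Matrix (Fin ℓ) (Fin m) ℝ),
    (∀ j, DStoch (D j)) ∧ (∀ j y w, 0 ≤ R j y w) ∧
    RowStoch (∑ j, R j) ∧ Q = ∑ j, D j * P * R j

/-- Joint probability matrix: nonnegative entries summing to one. -/
def JointProb {n ℓ : ℕ} (P : Matrix (Fin n) (Fin ℓ) ℝ) : Prop :=
  (∀ x y, 0 ≤ P x y) ∧ ∑ x, ∑ y, P x y = 1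

/-- Column sum (marginal). -/
noncomputable def ColSum {n m : ℕ} (Q : Matrix (Fin n) (Fin m) ℝ) (w : Fin m) : ℝ :=
  ∑ x, Q x w
/-- Nonincreasing rearrangement of a vector. -/
noncomputable def sortDesc {n : ℕ} (u : Fin n → ℝ) : Fin n → ℝ :=
  fun i => u (Tuple.sort (fun j => -u j) i)

/-- Sum of the `k` largest entries of `u`. -/
noncomputable def pSumDesc {n : ℕ} (u : Fin n → ℝ) (k : ℕ) : ℝ :=
  ∑ i ∈ Finset.univ.filter (fun i : Fin n => (i : ℕ) < k), sortDesc u i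

/-- `Majorizes u v` means `u ≻ v`: all partial sums of the sorted `u` dominate
those of `v`, and the total sums coincide. -/
def Majorizes {n : ℕ} (u v : Fin n → ℝ) : Prop :=
  (∀ k : ℕ, pSumDesc v k ≤ pSumDesc u k) ∧ ∑ i, u i = ∑ i, v i

variable {N : ℕ}

lemma mySortDesc_antitone (u : Fin N → ℝ) : Antitone (sortDesc u) := by
  intro i j hij
  have h := Tuple.monotone_sort (fun j => -u j) hij
  simp only [Function.comp_apply] at h
  unfold sortDesc
  linarith

lemma mySortDesc_sum (u : Fin N → ℝ) : ∑ i, sortDesc u i = ∑ i, u i :=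
  Equiv.sum_comp (Tuple.sort (fun j => -u j)) u

lemma myPSum_zero (u : Fin N → ℝ) : pSumDesc u 0 = 0 := by
  unfold pSumDesc; simp

lemma myPSum_total (u : Fin N → ℝ) {k : ℕ} (hk : N ≤ k) : pSumDesc u k = ∑ i, u i := by
  unfold pSumDesc
  rw [Finset.filter_true_of_mem (fun i _ => lt_of_lt_of_le i.isLt hk)]
  exact mySortDesc_sum u

lemma myPrefix_succ (g : Fin N → ℝ) {k : ℕ} (hk : k < N) :
    ∑ i ∈ univ.filter (fun i : Fin N => (i:ℕ) < k + 1), g i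
      = (∑ i ∈ univ.filter (fun i : Fin N => (i:ℕ) < k), g i) + g ⟨k, hk⟩ := by
  have he : univ.filter (fun i : Fin N => (i:ℕ) < k + 1)
      = insert ⟨k, hk⟩ (univ.filter (fun i : Fin N => (i:ℕ) < k)) := by
    ext i
    simp only [Finset.mem_filter, Finset.mem_univ, true_and, Finset.mem_insert, Fin.ext_iff]
    omega
  rw [he, Finset.sum_insert (by simp)]
  ring

lemma myCardFilter {k : ℕ} (hk : k ≤ N) :
    (univ.filter (fun i : Fin N => (i:ℕ) < k)).card = k := by
  induction k with
  | zero => simp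
  | succ k ih =>
    have hk' : k < N := hk
    have he : univ.filter (fun i : Fin N => (i:ℕ) < k + 1)
        = insert ⟨k, hk'⟩ (univ.filter (fun i : Fin N => (i:ℕ) < k)) := by
      ext i
      simp only [Finset.mem_filter, Finset.mem_univ, true_and, Finset.mem_insert, Fin.ext_iff]
      omega
    rw [he, Finset.card_insert_of_notMem (by simp), ih (le_of_lt hk')]

lemma myTopSum {g : Fin N → ℝ} (hg : Antitone g) (T : Finset (Fin N)) :
    ∑ i ∈ T, g i ≤ ∑ i ∈ univ.filter (fun i : Fin N => (i:ℕ) < T.card), g i := by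
  set k := T.card with hk
  set T' := univ.filter (fun i : Fin N => (i:ℕ) < k) with hT'
  have hkN : k ≤ N := by
    have := Finset.card_le_card (Finset.subset_univ T)
    simpa using this
  have hcard : T'.card = k := myCardFilter hkN
  have hAB : (T \ T').card = (T' \ T).card :=
    Finset.card_sdiff_comm (by rw [hcard])
  have key : ∑ i ∈ T \ T', g i ≤ ∑ i ∈ T' \ T, g i := by
    rcases Finset.eq_empty_or_nonempty (T' \ T) with hB | hB
    · have h0 : (T \ T').card = 0 := by rw [hAB, hB]; simp
      rw [Finset.card_eq_zero] at h0
      rw [h0, hB]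
    · have h1 : ∀ a ∈ T \ T', g a ≤ (T' \ T).inf' hB g := by
        intro a ha
        apply Finset.le_inf'
        intro b hb
        apply hg
        have hb' : (b : ℕ) < k := by
          have := (Finset.mem_sdiff.1 hb).1
          rw [hT', Finset.mem_filter] at this
          exact this.2
        have ha' : ¬ (a : ℕ) < k := by
          have := (Finset.mem_sdiff.1 ha).2
          rw [hT'] at this
          simpa using this
        exact Fin.le_def.mpr (by omega)
      calc ∑ i ∈ T \ T', g i ≤ (T \ T').card • (T' \ T).inf' hB g :=
            Finset.sum_le_card_nsmul _ _ _ h1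
        _ = (T' \ T).card • (T' \ T).inf' hB g := by rw [hAB]
        _ ≤ ∑ i ∈ T' \ T, g i :=
            Finset.card_nsmul_le_sum _ _ _ (fun b hb => Finset.inf'_le g hb)
  have e1 : ∑ i ∈ T ∩ T', g i + ∑ i ∈ T \ T', g i = ∑ i ∈ T, g i :=
    Finset.sum_inter_add_sum_sdiff T T' g
  have e2 : ∑ i ∈ T' ∩ T, g i + ∑ i ∈ T' \ T, g i = ∑ i ∈ T', g i :=
    Finset.sum_inter_add_sum_sdiff T' T g
  have e3 : T ∩ T' = T' ∩ T := Finset.inter_comm T T'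
  rw [e3] at e1
  linarith

lemma mySubsetSum (v : Fin N → ℝ) (S : Finset (Fin N)) :
    ∑ i ∈ S, v i ≤ pSumDesc v S.card := by
  set σ := Tuple.sort (fun j => -v j) with hσ
  have himg : ∑ i ∈ S.image σ.symm, sortDesc v i = ∑ i ∈ S, v i := by
    rw [Finset.sum_image (fun a _ b _ h => σ.symm.injective h)]
    apply Finset.sum_congr rfl
    intro i _
    show v (σ (σ.symm i)) = v i
    rw [Equiv.apply_symm_apply]
  have hcard : (S.image σ.symm).card = S.card :=
    Finset.card_image_of_injective _ σ.symm.injective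
  have := myTopSum (mySortDesc_antitone v) (S.image σ.symm)
  rw [himg, hcard] at this
  exact this

lemma myAbel (c D : ℕ → ℝ) (M : ℕ) :
    ∑ k ∈ Finset.range M, c k * (D (k+1) - D k)
      = ∑ k ∈ Finset.range M, (c k - c (k+1)) * D (k+1) + c M * D M - c 0 * D 0 := by
  induction M with
  | zero => simp
  | succ M ih => rw [Finset.sum_range_succ, Finset.sum_range_succ, ih]; ring

lemma myAbelLe {c A B : ℕ → ℝ} (M : ℕ)
    (hc : ∀ k, c (k+1) ≤ c k)
    (hA0 : A 0 = 0) (hB0 : B 0 = 0)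
    (hAB : ∀ k, A k ≤ B k) (hM : A M = B M) :
    ∑ k ∈ Finset.range M, c k * (A (k+1) - A k)
      ≤ ∑ k ∈ Finset.range M, c k * (B (k+1) - B k) := by
  have h1 := myAbel c (fun k => B k - A k) M
  have h2 : 0 ≤ ∑ k ∈ Finset.range M, (c k - c (k+1)) * ((fun k => B k - A k) (k+1)) :=
    Finset.sum_nonneg fun k _ => mul_nonneg (by linarith [hc k]) (by simp; linarith [hAB (k+1)])
  have h3 : ∑ k ∈ Finset.range M, c k * ((fun k => B k - A k) (k+1) - (fun k => B k - A k) k)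
      = ∑ k ∈ Finset.range M, c k * (B (k+1) - B k)
        - ∑ k ∈ Finset.range M, c k * (A (k+1) - A k) := by
    rw [← Finset.sum_sub_distrib]
    apply Finset.sum_congr rfl
    intro k _
    ring
  rw [h3] at h1
  simp only at h1 h2
  have hM' : B M - A M = 0 := by rw [hM]; ring
  have h0' : B 0 - A 0 = 0 := by rw [hA0, hB0]; ring
  rw [hM', h0'] at h1
  linarith

section
open scoped Classical in
lemma myKeyIneq {N : ℕ} {u v : Fin (N+1) → ℝ} (huv : Majorizes u v) (c : Fin (N+1) → ℝ) :
    ∃ σ : Equiv.Perm (Fin (N+1)), ∑ i, c i * v i ≤ ∑ i, c i * u (σ i) := by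
  set σc := Tuple.sort (fun j => -c j) with hσc
  set σu := Tuple.sort (fun j => -u j) with hσu
  refine ⟨σc.symm.trans σu, ?_⟩
  -- prefix sums
  set A : ℕ → ℝ := fun k => ∑ i ∈ univ.filter (fun i : Fin (N+1) => (i:ℕ) < k), v (σc i) with hA
  set B : ℕ → ℝ := pSumDesc u with hB
  set cE : ℕ → ℝ := fun k => sortDesc c ⟨min k N, by omega⟩ with hcE
  have hcmon : ∀ k, cE (k+1) ≤ cE k := by
    intro k
    apply mySortDesc_antitone c
    rw [Fin.le_def]
    simp only
    omega
  have hABle : ∀ k, A k ≤ B k := by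
    intro k
    by_cases hk : k ≤ N+1
    · have himg : A k = ∑ i ∈ (univ.filter (fun i : Fin (N+1) => (i:ℕ) < k)).image σc, v i := by
        rw [Finset.sum_image (fun a _ b _ h => σc.injective h)]
      have hc2 : ((univ.filter (fun i : Fin (N+1) => (i:ℕ) < k)).image σc).card = k := by
        rw [Finset.card_image_of_injective _ σc.injective, myCardFilter hk]
      calc A k = _ := himg
        _ ≤ pSumDesc v (((univ.filter (fun i : Fin (N+1) => (i:ℕ) < k)).image σc).card) :=
            mySubsetSum v _
        _ = pSumDesc v k := by rw [hc2]
        _ ≤ pSumDesc u k := huv.1 k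
    · push_neg at hk
      have hAk : A k = ∑ i, v (σc i) := by
        rw [hA]
        simp only
        rw [Finset.filter_true_of_mem (fun i _ => lt_of_lt_of_le i.isLt (by omega))]
      have : ∑ i, v (σc i) = ∑ i, v i := Equiv.sum_comp σc v
      rw [hAk, this, hB, myPSum_total u (by omega), ← huv.2]
  have hAN : A (N+1) = B (N+1) := by
    have hAk : A (N+1) = ∑ i, v (σc i) := by
      rw [hA]; simp only
      rw [Finset.filter_true_of_mem (fun i _ => i.isLt)]
    rw [hAk, Equiv.sum_comp σc v, hB, myPSum_total u (le_refl _), huv.2]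
  have hA0 : A 0 = 0 := by rw [hA]; simp
  have hB0 : B 0 = 0 := myPSum_zero u
  have hAstep : ∀ (i : Fin (N+1)), A (i.val+1) - A i.val = v (σc i) := by
    intro i
    rw [hA]; simp only
    rw [myPrefix_succ (fun j => v (σc j)) i.isLt]
    simp [Fin.eta]
  have hBstep : ∀ (i : Fin (N+1)), B (i.val+1) - B i.val = sortDesc u i := by
    intro i
    rw [hB]
    unfold pSumDesc
    rw [myPrefix_succ (sortDesc u) i.isLt]
    simp [Fin.eta]
  have hcEi : ∀ (i : Fin (N+1)), cE i.val = sortDesc c i := by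
    intro i
    simp only [hcE]
    congr 1
    apply Fin.ext
    simp only
    omega
  have eLHS : ∑ i, sortDesc c i * v (σc i)
      = ∑ k ∈ Finset.range (N+1), cE k * (A (k+1) - A k) := by
    rw [← Fin.sum_univ_eq_sum_range (fun k => cE k * (A (k+1) - A k)) (N+1)]
    apply Finset.sum_congr rfl
    intro i _
    rw [hcEi i, hAstep i]
  have eRHS : ∑ i, sortDesc c i * sortDesc u i
      = ∑ k ∈ Finset.range (N+1), cE k * (B (k+1) - B k) := by
    rw [← Fin.sum_univ_eq_sum_range (fun k => cE k * (B (k+1) - B k)) (N+1)]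
    apply Finset.sum_congr rfl
    intro i _
    rw [hcEi i, hBstep i]
  have e1 : ∑ i, c i * v i = ∑ i, sortDesc c i * v (σc i) :=
    (Equiv.sum_comp σc (fun i => c i * v i)).symm
  have e3 : ∑ i, c i * u ((σc.symm.trans σu) i) = ∑ i, sortDesc c i * sortDesc u i := by
    rw [← Equiv.sum_comp σc (fun i => c i * u ((σc.symm.trans σu) i))]
    apply Finset.sum_congr rfl
    intro i _
    have : (σc.symm.trans σu) (σc i) = σu i := by simp
    rw [this]
    rfl
  rw [e1, e3, eLHS, eRHS]
  exact myAbelLe (N+1) hcmon hA0 hB0 hABle hAN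

open scoped Classical in
lemma myHLP {N : ℕ} {u v : Fin (N+1) → ℝ} (huv : Majorizes u v) :
    ∃ D : Matrix (Fin (N+1)) (Fin (N+1)) ℝ, DStoch D ∧ D.mulVec u = v := by
  set S : Finset (Fin (N+1) → ℝ) :=
    Finset.image (fun σ : Equiv.Perm (Fin (N+1)) => u ∘ σ) Finset.univ with hS
  have hvS : v ∈ convexHull ℝ (S : Set (Fin (N+1) → ℝ)) := by
    by_contra hv
    obtain ⟨f, t, hft, hfS⟩ := geometric_hahn_banach_point_closed
      (convex_convexHull ℝ _) ((S : Set (Fin (N+1) → ℝ)).toFinite.isClosed_convexHull ℝ) hv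
    set c : Fin (N+1) → ℝ := fun i => -(f (Pi.single i 1)) with hc
    have hfy : ∀ y : Fin (N+1) → ℝ, f y = -∑ i, c i * y i := by
      intro y
      have hy : y = ∑ i, Pi.single i (y i) := (Finset.univ_sum_single y).symm
      calc f y = f (∑ i, Pi.single i (y i)) := by rw [← hy]
        _ = ∑ i, f (Pi.single i (y i)) := by rw [map_sum]
        _ = ∑ i, y i * f (Pi.single i 1) := by
            apply Finset.sum_congr rfl
            intro i _
            have : Pi.single i (y i) = y i • (Pi.single i (1:ℝ) : Fin (N+1) → ℝ) := by
              rw [← Pi.single_smul]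
              norm_num
            rw [this, f.map_smul, smul_eq_mul]
        _ = -∑ i, c i * y i := by
            rw [← Finset.sum_neg_distrib]
            apply Finset.sum_congr rfl
            intro i _
            rw [hc]
            ring
    obtain ⟨σ, hσ⟩ := myKeyIneq huv c
    have h1 : f (u ∘ σ) ≤ f v := by
      rw [hfy, hfy]
      simp only [neg_le_neg_iff]
      exact hσ
    have h2 : t < f (u ∘ σ) := by
      apply hfS
      apply subset_convexHull
      rw [Finset.coe_image]
      exact ⟨σ, by simp, rfl⟩
    linarith
  rw [Finset.convexHull_eq] at hvS
  obtain ⟨wt, hwt0, hwt1, hwtv⟩ := hvS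
  have hvsum : v = ∑ y ∈ S, wt y • y := by
    rw [← hwtv, Finset.centerMass_eq_of_sum_1 _ _ hwt1]
    simp
  have hchoice : ∀ y ∈ S, ∃ σ : Equiv.Perm (Fin (N+1)), u ∘ σ = y := by
    intro y hy
    rw [hS, Finset.mem_image] at hy
    obtain ⟨σ, _, hσ⟩ := hy
    exact ⟨σ, hσ⟩
  choose g hg using hchoice
  set P : Equiv.Perm (Fin (N+1)) → Matrix (Fin (N+1)) (Fin (N+1)) ℝ :=
    fun σ => Matrix.of (fun i j => if σ i = j then 1 else 0) with hP
  refine ⟨∑ y ∈ S.attach, wt y.1 • P (g y.1 y.2), ⟨?_, ?_, ?_⟩, ?_⟩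
  · intro i j
    rw [Matrix.sum_apply]
    apply Finset.sum_nonneg
    intro y _
    rw [Matrix.smul_apply, hP, smul_eq_mul]
    apply mul_nonneg (hwt0 y.1 y.2)
    simp only [Matrix.of_apply]
    split <;> norm_num
  · intro i
    simp only [Matrix.sum_apply]
    rw [Finset.sum_comm]
    calc ∑ y ∈ S.attach, ∑ j, (wt y.1 • P (g y.1 y.2)) i j
        = ∑ y ∈ S.attach, wt y.1 := by
          apply Finset.sum_congr rfl
          intro y _
          simp only [Matrix.smul_apply, hP, Matrix.of_apply, smul_eq_mul]
          rw [← Finset.mul_sum]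
          rw [Finset.sum_ite_eq Finset.univ (g y.1 y.2 i) (fun _ => (1:ℝ))]
          simp
      _ = 1 := by rw [Finset.sum_attach S wt]; exact hwt1
  · intro j
    simp only [Matrix.sum_apply]
    rw [Finset.sum_comm]
    calc ∑ y ∈ S.attach, ∑ i, (wt y.1 • P (g y.1 y.2)) i j
        = ∑ y ∈ S.attach, wt y.1 := by
          apply Finset.sum_congr rfl
          intro y _
          simp only [Matrix.smul_apply, hP, Matrix.of_apply, smul_eq_mul]
          rw [← Finset.mul_sum]
          have : ∀ i : Fin (N+1), (if g y.1 y.2 i = j then (1:ℝ) else 0)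
              = if i = (g y.1 y.2).symm j then (1:ℝ) else 0 := by
            intro i
            congr 1
            simp [Equiv.eq_symm_apply, eq_comm]
          rw [Finset.sum_congr rfl (fun i _ => this i)]
          rw [Finset.sum_ite_eq' Finset.univ ((g y.1 y.2).symm j) (fun _ => (1:ℝ))]
          simp
      _ = 1 := by rw [Finset.sum_attach S wt]; exact hwt1
  · funext x
    rw [Matrix.mulVec, dotProduct]
    simp only [Matrix.sum_apply, Matrix.smul_apply, hP, Matrix.of_apply, smul_eq_mul]
    simp only [Finset.sum_mul]
    rw [Finset.sum_comm]
    have : ∀ y ∈ S.attach, ∑ k, wt y.1 * (if g y.1 y.2 x = k then (1:ℝ) else 0) * u k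
        = wt y.1 * y.1 x := by
      intro y _
      have he : ∀ k, wt y.1 * (if g y.1 y.2 x = k then (1:ℝ) else 0) * u k
          = if g y.1 y.2 x = k then wt y.1 * u k else 0 := by
        intro k
        split <;> ring
      rw [Finset.sum_congr rfl (fun k _ => he k)]
      rw [Finset.sum_ite_eq Finset.univ (g y.1 y.2 x) (fun k => wt y.1 * u k)]
      simp only [Finset.mem_univ, if_true]
      have := congrFun (hg y.1 y.2) x
      simp only [Function.comp_apply] at this
      rw [this]
    rw [Finset.sum_congr rfl this]
    have : ∑ y ∈ S.attach, wt y.1 * y.1 x = ∑ y ∈ S, wt y * y x := by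
      rw [← Finset.sum_attach S (fun y => wt y * y x)]
    rw [this, hvsum]
    simp

lemma myIdDS {N : ℕ} : DStoch (1 : Matrix (Fin N) (Fin N) ℝ) := by
  refine ⟨fun i j => ?_, fun i => ?_, fun j => ?_⟩
  · rw [Matrix.one_apply]; split <;> norm_num
  · simp [Matrix.one_apply]
  · simp [Matrix.one_apply]

lemma myColDS {N : ℕ} (c : Fin (N+1) → ℝ) (hc0 : ∀ x, 0 ≤ c x) (hc1 : ∑ x, c x = 1) :
    ∃ E : Matrix (Fin (N+1)) (Fin (N+1)) ℝ, DStoch E ∧ ∀ x, E x 0 = c x := by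
  have hcle : ∀ x, c x ≤ 1 := by
    intro x
    have h1 : c x ≤ ∑ i, c i := Finset.single_le_sum (fun i _ => hc0 i) (Finset.mem_univ x)
    linarith [hc1 ▸ h1]
  refine ⟨Matrix.of fun x j => if j = 0 then c x else (1 - c x)/(N:ℝ), ⟨?_, ?_, ?_⟩,
    fun x => rfl⟩
  · intro i j
    simp only [Matrix.of_apply]
    split
    · exact hc0 i
    · apply div_nonneg (by linarith [hcle i]) (by positivity)
  · intro x
    simp only [Matrix.of_apply]
    rw [Fin.sum_univ_succ]
    simp only [if_pos rfl]
    have hsucc : ∀ j : Fin N, (if (j.succ : Fin (N+1)) = 0 then c x else (1 - c x)/(N:ℝ))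
        = (1 - c x)/(N:ℝ) := by
      intro j
      rw [if_neg (Fin.succ_ne_zero j)]
    rw [Finset.sum_congr rfl (fun j _ => hsucc j), Finset.sum_const, Finset.card_univ,
      Fintype.card_fin]
    rcases Nat.eq_zero_or_pos N with hN | hN
    · subst hN
      have : x = 0 := Fin.ext (by omega)
      have h1 : c 0 = 1 := by simpa using hc1
      simp [this, h1]
    · have hN' : (N:ℝ) ≠ 0 := by positivity
      simp only [if_true, nsmul_eq_mul]
      field_simp
      ring
  · intro j
    simp only [Matrix.of_apply]
    by_cases hj : j = 0
    · subst hj; simpa using hc1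
    · have hN : 0 < N := by
        rcases Nat.eq_zero_or_pos N with h0 | h0
        · exfalso; subst h0; exact hj (Fin.ext (by omega))
        · exact h0
      have hN' : (N:ℝ) ≠ 0 := by positivity
      rw [Finset.sum_congr rfl (fun x _ => if_neg hj)]
      rw [← Finset.sum_div, Finset.sum_sub_distrib, Finset.sum_const, Finset.card_univ,
        Fintype.card_fin, hc1]
      field_simp
      simp [nsmul_eq_mul]
end

open scoped Classical in
theorem stmt17 {n m : ℕ} (ω : Fin (n + 1) → ℝ) (hω0 : ∀ x, 0 ≤ ω x) (hω1 : ∑ x, ω x = 1)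
    (Q : Matrix (Fin (n + 1)) (Fin m) ℝ) (hQ : JointProb Q)
    (α : ℝ) (hα : α ∈ Set.Icc (0 : ℝ) 1)
    (h : 1 - α ≤
      ∑ w ∈ Finset.univ.filter
          (fun w => Majorizes ω (fun x => Q x w / ColSum Q w)), ColSum Q w) :
    CondMaj
      (Matrix.of fun (x : Fin (n + 1)) (j : Fin 2) =>
        if j = 0 then (if x = 0 then α else 0) else (1 - α) * ω x)
      Q := by
  obtain ⟨hα0, hα1⟩ := hα
  obtain ⟨hQ0, hQ1⟩ := hQ
  set q : Fin m → ℝ := ColSum Q with hqdef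
  set W : Finset (Fin m) :=
    Finset.univ.filter (fun w => Majorizes ω (fun x => Q x w / q w)) with hWdef
  set s : ℝ := ∑ w ∈ W, q w with hsdef
  have hq0 : ∀ w, 0 ≤ q w := fun w => Finset.sum_nonneg fun x _ => hQ0 x w
  have hqsum : ∑ w, q w = 1 := by
    rw [hqdef]
    show ∑ w, ∑ x, Q x w = 1
    rw [Finset.sum_comm]
    exact hQ1
  have hm : 0 < m := by
    rcases Nat.eq_zero_or_pos m with h0 | h0
    · exfalso
      subst h0
      simpa using hqsum
    · exact h0
  have hm' : (m:ℝ) ≠ 0 := by positivity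
  have hWq : ∀ w ∈ W, Majorizes ω (fun x => Q x w / q w) := by
    intro w hw
    rw [hWdef, Finset.mem_filter] at hw
    exact hw.2
  have hWpos : ∀ w ∈ W, 0 < q w := by
    intro w hw
    rcases eq_or_lt_of_le (hq0 w) with h0 | h0
    · exfalso
      have h2 := (hWq w hw).2
      have h3 : ∑ x, Q x w / q w = 0 := by
        rw [← h0]
        simp
      rw [hω1, h3] at h2
      norm_num at h2
    · exact h0
  have hs0 : 0 ≤ s := Finset.sum_nonneg fun w _ => hq0 w
  have hs1 : s ≤ 1 := by
    rw [hsdef, ← hqsum]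
    exact Finset.sum_le_sum_of_subset_of_nonneg (Finset.subset_univ W) fun w _ _ => hq0 w
  have hspos : W.Nonempty → 0 < s := by
    rintro ⟨w, hw⟩
    have h1 : q w ≤ s := Finset.single_le_sum (fun i (_ : i ∈ W) => hq0 i) hw
    linarith [hWpos w hw]
  -- the conditional distributions
  set cw : Fin m → Fin (n+1) → ℝ :=
    fun w x => if q w = 0 then (if x = 0 then 1 else 0) else Q x w / q w with hcw
  have hcw0 : ∀ w x, 0 ≤ cw w x := by
    intro w x
    simp only [hcw]
    split
    · split <;> norm_num
    · exact div_nonneg (hQ0 x w) (hq0 w)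
  have hcw1 : ∀ w, ∑ x, cw w x = 1 := by
    intro w
    by_cases hqw : q w = 0
    · simp [hcw, hqw]
    · simp only [hcw, if_neg hqw]
      rw [← Finset.sum_div]
      have : ∑ x, Q x w = q w := rfl
      rw [this, div_self hqw]
  have hcwQ : ∀ w, q w ≠ 0 → ∀ x, q w * cw w x = Q x w := by
    intro w hqw x
    simp only [hcw, if_neg hqw]
    field_simp
  -- the weights
  set β : Fin m → ℝ := fun w => if w ∈ W then (1-α) * (q w / s) else 0 with hβ
  have hβ0 : ∀ w, 0 ≤ β w := by
    intro w
    simp only [hβ]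
    split
    · exact mul_nonneg (by linarith) (div_nonneg (hq0 w) hs0)
    · exact le_refl 0
  have hβq : ∀ w, β w ≤ q w := by
    intro w
    simp only [hβ]
    split
    · rename_i hw
      have hsp : 0 < s := hspos ⟨w, hw⟩
      have h1 : (1-α)/s ≤ 1 := (div_le_one hsp).2 h
      calc (1-α) * (q w / s) = q w * ((1-α)/s) := by ring
        _ ≤ q w * 1 := mul_le_mul_of_nonneg_left h1 (hq0 w)
        _ = q w := mul_one _
    · exact hq0 w
  have hβW : ∀ w, w ∉ W → β w = 0 := by
    intro w hw
    simp only [hβ, if_neg hw]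
  have hβsum : ∑ w, β w = 1 - α := by
    have e : ∑ w, β w = ∑ w ∈ W, (1-α) * (q w / s) := by
      rw [hβ, Finset.sum_ite_mem, Finset.univ_inter]
    rcases eq_or_lt_of_le hs0 with hsz | hsp
    · have hWe : W = ∅ := by
        rcases Finset.eq_empty_or_nonempty W with he | hne
        · exact he
        · exfalso
          have := hspos hne
          linarith
      have hα1' : (1:ℝ) - α = 0 := by
        have h2 : 1 - α ≤ s := h
        linarith
      rw [e, hWe, Finset.sum_empty, hα1']
    · rw [e]
      have e2 : ∑ w ∈ W, (1-α) * (q w / s) = (1-α) * ((∑ w ∈ W, q w) / s) := by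
        rw [← Finset.mul_sum, ← Finset.sum_div]
      rw [e2, ← hsdef, div_self (ne_of_gt hsp), mul_one]
  -- the row-weights
  set r1 : Fin m → ℝ := fun w => if α = 1 then 1/(m:ℝ) else β w / (1-α) with hr1
  have hr1_0 : ∀ w, 0 ≤ r1 w := by
    intro w
    simp only [hr1]
    split
    · positivity
    · exact div_nonneg (hβ0 w) (by linarith)
  have hr1_sum : ∑ w, r1 w = 1 := by
    by_cases hα' : α = 1
    · simp only [hr1, if_pos hα']
      rw [Finset.sum_const, Finset.card_univ, Fintype.card_fin, nsmul_eq_mul]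
      field_simp
    · simp only [hr1, if_neg hα']
      rw [← Finset.sum_div, hβsum]
      have h10 : (1:ℝ) - α ≠ 0 := sub_ne_zero.2 (Ne.symm hα')
      field_simp
  have hr1β : ∀ w, (1-α) * r1 w = β w := by
    intro w
    by_cases hα' : α = 1
    · have hb : β w = 0 := by
        simp only [hβ]
        split
        · rw [hα']
          ring
        · rfl
      rw [hb, hα']
      ring
    · simp only [hr1, if_neg hα']
      have h10 : (1:ℝ) - α ≠ 0 := sub_ne_zero.2 (Ne.symm hα')
      field_simp
  set r0 : Fin m → ℝ := fun w => if α = 0 then 1/(m:ℝ) else (q w - β w)/α with hr0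
  have hr0_0 : ∀ w, 0 ≤ r0 w := by
    intro w
    simp only [hr0]
    split
    · positivity
    · exact div_nonneg (by linarith [hβq w]) hα0
  have hr0_sum : ∑ w, r0 w = 1 := by
    by_cases hα' : α = 0
    · simp only [hr0, if_pos hα']
      rw [Finset.sum_const, Finset.card_univ, Fintype.card_fin, nsmul_eq_mul]
      field_simp
    · simp only [hr0, if_neg hα']
      rw [← Finset.sum_div, Finset.sum_sub_distrib, hqsum, hβsum]
      field_simp
      ring
  have hr0β : ∀ w, α * r0 w = q w - β w := by
    intro w
    by_cases hα' : α = 0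
    · have hsge : (1:ℝ) ≤ s := by
        have h2 : 1 - α ≤ s := h
        rw [hα'] at h2
        linarith
      have hseq : s = 1 := le_antisymm hs1 hsge
      have hqβ : q w = β w := by
        by_cases hw : w ∈ W
        · simp only [hβ, if_pos hw, hseq, hα']
          field_simp
          ring
        · have hβw : β w = 0 := hβW w hw
          have h2 : ∑ x ∈ Finset.univ \ W, q x = 0 := by
            have h3 := Finset.sum_sdiff (f := q) (Finset.subset_univ W)
            rw [hqsum, ← hsdef, hseq] at h3
            linarith
          have h4 := (Finset.sum_eq_zero_iff_of_nonneg (fun x _ => hq0 x)).1 h2 w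
            (by rw [Finset.mem_sdiff]; exact ⟨Finset.mem_univ w, hw⟩)
          rw [hβw, h4]
      rw [hα', hqβ]
      ring
    · simp only [hr0, if_neg hα']
      field_simp
  -- the doubly stochastic matrices
  have hmaj' : ∀ w ∈ W, Majorizes ω (cw w) := by
    intro w hw
    have h1 := hWq w hw
    have hqw := (hWpos w hw).ne'
    have he : cw w = fun x => Q x w / q w := by
      funext x
      simp only [hcw, if_neg hqw]
    rw [he]
    exact h1
  choose Dm hDm using fun (w : Fin m) (hw : w ∈ W) => myHLP (hmaj' w hw)
  choose Ec hEc using fun (w : Fin m) => myColDS (cw w) (hcw0 w) (hcw1 w)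
  set Dmaj : Fin m → Matrix (Fin (n+1)) (Fin (n+1)) ℝ :=
    fun w => if hw : w ∈ W then Dm w hw else 1 with hDmaj
  have hDmajDS : ∀ w, DStoch (Dmaj w) := by
    intro w
    simp only [hDmaj]
    split
    · rename_i hw
      exact (hDm w hw).1
    · exact myIdDS
  have hDmajω : ∀ w ∈ W, (Dmaj w).mulVec ω = cw w := by
    intro w hw
    simp only [hDmaj, dif_pos hw]
    exact (hDm w hw).2
  -- assemble
  set Dfun : Fin (m+m) → Matrix (Fin (n+1)) (Fin (n+1)) ℝ :=
    fun j => Fin.addCases (motive := fun _ => Matrix (Fin (n+1)) (Fin (n+1)) ℝ)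
      (fun w => Ec w) (fun w => Dmaj w) j with hDfun
  set Rfun : Fin (m+m) → Matrix (Fin 2) (Fin m) ℝ :=
    fun j => Fin.addCases (motive := fun _ => Matrix (Fin 2) (Fin m) ℝ)
      (fun w => Matrix.of fun y w' => if y = 0 ∧ w' = w then r0 w else 0)
      (fun w => Matrix.of fun y w' => if y = 1 ∧ w' = w then r1 w else 0) j with hRfun
  have hDfunL : ∀ w : Fin m, Dfun (Fin.castAdd m w) = Ec w := by
    intro w
    simp only [hDfun]
    rw [Fin.addCases_left]
  have hDfunR : ∀ w : Fin m, Dfun (Fin.natAdd m w) = Dmaj w := by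
    intro w
    simp only [hDfun]
    rw [Fin.addCases_right]
  have hRfunL : ∀ w : Fin m, Rfun (Fin.castAdd m w)
      = Matrix.of (fun y w' => if y = 0 ∧ w' = w then r0 w else 0) := by
    intro w
    simp only [hRfun]
    rw [Fin.addCases_left]
  have hRfunR : ∀ w : Fin m, Rfun (Fin.natAdd m w)
      = Matrix.of (fun y w' => if y = 1 ∧ w' = w then r1 w else 0) := by
    intro w
    simp only [hRfun]
    rw [Fin.addCases_right]
  refine ⟨m + m, Dfun, Rfun, ?_, ?_, ?_, ?_⟩
  · intro j
    refine Fin.addCases ?_ ?_ j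
    · intro w
      rw [hDfunL]
      exact (hEc w).1
    · intro w
      rw [hDfunR]
      exact hDmajDS w
  · intro j
    refine Fin.addCases ?_ ?_ j
    · intro w y w'
      rw [hRfunL]
      simp only [Matrix.of_apply]
      split
      · exact hr0_0 w
      · exact le_refl 0
    · intro w y w'
      rw [hRfunR]
      simp only [Matrix.of_apply]
      split
      · exact hr1_0 w
      · exact le_refl 0
  · have hRsum : ∀ (y : Fin 2) (w' : Fin m),
        (∑ j : Fin (m+m), Rfun j) y w'
        = (if y = 0 then r0 w' else 0) + (if y = 1 then r1 w' else 0) := by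
      intro y w'
      rw [Matrix.sum_apply, Fin.sum_univ_add]
      congr 1
      · have he : ∀ w : Fin m, Rfun (Fin.castAdd m w) y w'
            = if y = 0 ∧ w' = w then r0 w else 0 := by
          intro w
          rw [hRfunL]
          rfl
        rw [Finset.sum_congr rfl fun w _ => he w]
        by_cases hy : y = 0
        · simp only [hy, true_and]
          rw [Finset.sum_ite_eq Finset.univ w' r0]
          simp
        · simp [hy]
      · have he : ∀ w : Fin m, Rfun (Fin.natAdd m w) y w'
            = if y = 1 ∧ w' = w then r1 w else 0 := by
          intro w
          rw [hRfunR]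
          rfl
        rw [Finset.sum_congr rfl fun w _ => he w]
        by_cases hy : y = 1
        · simp only [hy, true_and]
          rw [Finset.sum_ite_eq Finset.univ w' r1]
          simp
        · simp [hy]
    constructor
    · intro y w'
      rw [hRsum y w']
      have h1 : (0:ℝ) ≤ if y = 0 then r0 w' else 0 := by
        split
        · exact hr0_0 w'
        · exact le_refl 0
      have h2 : (0:ℝ) ≤ if y = 1 then r1 w' else 0 := by
        split
        · exact hr1_0 w'
        · exact le_refl 0
      linarith
    · intro y
      rw [Finset.sum_congr rfl fun w' _ => hRsum y w']
      fin_cases y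
      · simpa using hr0_sum
      · simpa using hr1_sum
  · -- the main identity
    have hMP : ∀ (M : Matrix (Fin (n+1)) (Fin (n+1)) ℝ) (R' : Matrix (Fin 2) (Fin m) ℝ)
        (x : Fin (n+1)) (w' : Fin m),
        (M * (Matrix.of fun (x : Fin (n + 1)) (j : Fin 2) =>
          if j = 0 then (if x = 0 then α else 0) else (1 - α) * ω x) * R') x w'
        = α * M x 0 * R' 0 w' + ((1-α) * ∑ k, M x k * ω k) * R' 1 w' := by
      intro M R' x w'
      rw [Matrix.mul_apply, Fin.sum_univ_two]
      have h0 : (M * Matrix.of fun (x : Fin (n + 1)) (j : Fin 2) =>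
          if j = 0 then (if x = 0 then α else 0) else (1 - α) * ω x) x 0 = α * M x 0 := by
        rw [Matrix.mul_apply]
        have he : ∀ k : Fin (n+1), M x k * ((Matrix.of fun (x : Fin (n + 1)) (j : Fin 2) =>
            if j = 0 then (if x = 0 then α else 0) else (1 - α) * ω x) k 0)
            = if k = 0 then M x k * α else 0 := by
          intro k
          simp only [Matrix.of_apply, if_pos rfl]
          by_cases hk : k = 0 <;> simp [hk]
        rw [Finset.sum_congr rfl fun k _ => he k, Finset.sum_ite_eq' Finset.univ 0
          (fun k => M x k * α)]
        simp [mul_comm]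
      have h1 : (M * Matrix.of fun (x : Fin (n + 1)) (j : Fin 2) =>
          if j = 0 then (if x = 0 then α else 0) else (1 - α) * ω x) x 1
          = (1-α) * ∑ k, M x k * ω k := by
        rw [Matrix.mul_apply]
        have he : ∀ k : Fin (n+1), M x k * ((Matrix.of fun (x : Fin (n + 1)) (j : Fin 2) =>
            if j = 0 then (if x = 0 then α else 0) else (1 - α) * ω x) k 1)
            = (1-α) * (M x k * ω k) := by
          intro k
          simp only [Matrix.of_apply, if_neg (show ¬((1:Fin 2) = 0) by decide)]
          ring
        rw [Finset.sum_congr rfl fun k _ => he k, ← Finset.mul_sum]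
      rw [h0, h1]
    funext x w'
    rw [Matrix.sum_apply, Fin.sum_univ_add]
    have hL : ∀ w : Fin m,
        (Dfun (Fin.castAdd m w) *
          (Matrix.of fun (x : Fin (n + 1)) (j : Fin 2) =>
            if j = 0 then (if x = 0 then α else 0) else (1 - α) * ω x) *
          Rfun (Fin.castAdd m w)) x w'
        = if w' = w then α * r0 w * cw w x else 0 := by
      intro w
      rw [hDfunL, hRfunL, hMP]
      have e0 : (Matrix.of fun (y : Fin 2) w'' => if y = 0 ∧ w'' = w then r0 w else 0)
          (0:Fin 2) w' = if w' = w then r0 w else 0 := by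
        simp only [Matrix.of_apply, true_and]
      have e1 : (Matrix.of fun (y : Fin 2) w'' => if y = 0 ∧ w'' = w then r0 w else 0)
          (1:Fin 2) w' = 0 := by
        simp only [Matrix.of_apply]
        rw [if_neg]
        simp [show ¬((1:Fin 2) = 0) by decide]
      rw [e0, e1, (hEc w).2 x, mul_zero, add_zero]
      split
      · ring
      · ring
    have hR' : ∀ w : Fin m,
        (Dfun (Fin.natAdd m w) *
          (Matrix.of fun (x : Fin (n + 1)) (j : Fin 2) =>
            if j = 0 then (if x = 0 then α else 0) else (1 - α) * ω x) *
          Rfun (Fin.natAdd m w)) x w'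
        = if w' = w then (1-α) * r1 w * ((Dmaj w).mulVec ω x) else 0 := by
      intro w
      rw [hDfunR, hRfunR, hMP]
      have e0 : (Matrix.of fun (y : Fin 2) w'' => if y = 1 ∧ w'' = w then r1 w else 0)
          (0:Fin 2) w' = 0 := by
        simp only [Matrix.of_apply]
        rw [if_neg]
        simp [show ¬((0:Fin 2) = 1) by decide]
      have e1 : (Matrix.of fun (y : Fin 2) w'' => if y = 1 ∧ w'' = w then r1 w else 0)
          (1:Fin 2) w' = if w' = w then r1 w else 0 := by
        simp only [Matrix.of_apply, true_and]
      have emv : ∑ k, Dmaj w x k * ω k = (Dmaj w).mulVec ω x := rfl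
      rw [e0, e1, emv, mul_zero, zero_add]
      split
      · ring
      · ring
    rw [Finset.sum_congr rfl fun w _ => hL w, Finset.sum_congr rfl fun w _ => hR' w]
    rw [Finset.sum_ite_eq Finset.univ w' (fun w => α * r0 w * cw w x),
      Finset.sum_ite_eq Finset.univ w' (fun w => (1-α) * r1 w * ((Dmaj w).mulVec ω x))]
    simp only [Finset.mem_univ, if_true]
    rw [show α * r0 w' * cw w' x = (α * r0 w') * cw w' x from rfl, hr0β w']
    rw [show (1-α) * r1 w' * ((Dmaj w').mulVec ω x) = ((1-α) * r1 w') * ((Dmaj w').mulVec ω x)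
      from rfl, hr1β w']
    by_cases hw : w' ∈ W
    · rw [hDmajω w' hw]
      have hqw := (hWpos w' hw).ne'
      have hc := hcwQ w' hqw x
      rw [← hc]
      ring
    · rw [hβW w' hw]
      by_cases hqw : q w' = 0
      · have hQ0' : Q x w' = 0 := by
          have h2 : ∑ x, Q x w' = 0 := hqw
          exact (Finset.sum_eq_zero_iff_of_nonneg (fun x _ => hQ0 x w')).1 h2 x
            (Finset.mem_univ x)
        rw [hQ0', hqw]
        ring
      · have hc := hcwQ w' hqw x
        rw [← hc]
        ring
end

section
/- For angles α ∈ [0, π/4], max over θ, φ ∈ ℝ of ½(cos²θ cos²φ + cos²(θ−α) cos²(φ−α)) equals ¼(1 + cos α)², attained at θ = φ = α/2. -/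
open Real

lemma aux19 (c d s x : ℝ) (hc2 : 1 / 2 ≤ c ^ 2) (hc0 : 0 ≤ c)
    (h1 : s ^ 2 + x ^ 2 = 1) (h2 : c ^ 2 + d ^ 2 = 1) :
    x ^ 4 + (x * c + s * d) ^ 4 ≤ (1 + c) ^ 2 / 2 := by
  have htsq : ((x ^ 2 - s ^ 2) * c + 2 * s * x * d) ^ 2
      + ((x ^ 2 - s ^ 2) * d - 2 * s * x * c) ^ 2 = 1 := by
    linear_combination (s^2 + x^2 + 1) * (c^2 + d^2) * h1 + h2
  have ht1 : (x ^ 2 - s ^ 2) * c + 2 * s * x * d ≤ 1 := by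
    nlinarith [sq_nonneg ((x ^ 2 - s ^ 2) * c + 2 * s * x * d - 1)]
  have ht2 : -1 ≤ (x ^ 2 - s ^ 2) * c + 2 * s * x * d := by
    nlinarith [sq_nonneg ((x ^ 2 - s ^ 2) * c + 2 * s * x * d + 1)]
  have eq : x ^ 4 + (x * c + s * d) ^ 4 = (1 + c) ^ 2 / 2
      - (1 - ((x ^ 2 - s ^ 2) * c + 2 * s * x * d))
        * ((4 * c ^ 2 - 2) * (1 + ((x ^ 2 - s ^ 2) * c + 2 * s * x * d)) + 4 * c) / 4 := by
    linear_combination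
      (d^4 + (3/2)*c^2 - c^4 + 2*x^2*d^2 - x^2*d^4 - (3/2)*x^2*c^2 + 2*x^2*c^2*d^2
        + 3*x^2*c^4 - 2*s*x*c*d + 4*s*x*c*d^3 + 4*s*x*c^3*d + s^2*d^4 + (1/2)*s^2*c^2
        - s^2*c^4) * h1
      + (1 + d^2 - c^2 - 2*x^2*d^2 + 4*x^2*c^2 - x^4 + x^4*d^2 - 3*x^4*c^2
        + 4*s*x*c*d - 4*s*x^3*c*d) * h2
  have key : 0 ≤ (1 - ((x ^ 2 - s ^ 2) * c + 2 * s * x * d))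
      * ((4 * c ^ 2 - 2) * (1 + ((x ^ 2 - s ^ 2) * c + 2 * s * x * d)) + 4 * c) := by
    apply mul_nonneg (by linarith)
    nlinarith
  linarith

lemma aux19' (α θ : ℝ) (hc2 : 1 / 2 ≤ cos α ^ 2) (hc0 : 0 ≤ cos α) :
    cos θ ^ 4 + cos (θ - α) ^ 4 ≤ (1 + cos α) ^ 2 / 2 := by
  have h := aux19 (cos α) (sin α) (sin θ) (cos θ) hc2 hc0 (sin_sq_add_cos_sq θ)
    (cos_sq_add_sin_sq α)
  rwa [Real.cos_sub θ α]

theorem stmt19 (α : ℝ) (hα : α ∈ Set.Icc 0 (π / 4)) :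
    IsGreatest
      {z : ℝ | ∃ θ φ : ℝ,
        z = (1 / 2) * ((cos θ) ^ 2 * (cos φ) ^ 2 +
          (cos (θ - α)) ^ 2 * (cos (φ - α)) ^ 2)}
      ((1 / 4) * (1 + cos α) ^ 2) ∧
    (1 / 2) * ((cos (α / 2)) ^ 2 * (cos (α / 2)) ^ 2 +
        (cos (α / 2 - α)) ^ 2 * (cos (α / 2 - α)) ^ 2) =
      (1 / 4) * (1 + cos α) ^ 2 := by
  obtain ⟨h0, h4⟩ := hα
  have hα2 : cos (α / 2) ^ 2 = (1 + cos α) / 2 := by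
    rw [cos_sq]; ring_nf
  have hattain : (1 / 2) * ((cos (α / 2)) ^ 2 * (cos (α / 2)) ^ 2 +
        (cos (α / 2 - α)) ^ 2 * (cos (α / 2 - α)) ^ 2) =
      (1 / 4) * (1 + cos α) ^ 2 := by
    have h : α / 2 - α = -(α / 2) := by ring
    rw [h, cos_neg, hα2]; ring
  have hc0 : 0 ≤ cos α := cos_nonneg_of_mem_Icc ⟨by linarith [pi_pos.le], by linarith [pi_pos]⟩
  have hc2 : 1 / 2 ≤ cos α ^ 2 := by
    have h2a : cos (2 * α) = 2 * cos α ^ 2 - 1 := cos_two_mul α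
    have : 0 ≤ cos (2 * α) := cos_nonneg_of_mem_Icc ⟨by linarith [pi_pos.le], by linarith⟩
    linarith
  refine ⟨⟨⟨α / 2, α / 2, hattain.symm⟩, ?_⟩, hattain⟩
  rintro z ⟨θ, φ, rfl⟩
  have h1 := aux19' α θ hc2 hc0
  have h2 := aux19' α φ hc2 hc0
  nlinarith [sq_nonneg (cos θ ^ 2 - cos φ ^ 2), sq_nonneg (cos (θ - α) ^ 2 - cos (φ - α) ^ 2)]
end
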